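/- For m > |ν| (real parameters) and α > 0, ∫₀^∞ x^{m−1} K_ν(αx) dx = (2^{m−2}/α^m) · Γ((m−ν)/2) · Γ((m+ν)/2). -/

import Mathlib

open MeasureTheory Real

open Set Filter

section Aux

lemma betaCpx_eq (a b : ℝ) :
    Complex.betaIntegral a b = ((∫ u in (0:ℝ)..1, u^(a-1) * (1-u)^(b-1) : ℝ) : ℂ) := by
  rw [Complex.betaIntegral]
  rw [intervalIntegral.integral_of_le zero_le_one, intervalIntegral.integral_of_le zero_le_one,
    MeasureTheory.integral_Ioc_eq_integral_Ioo, MeasureTheory.integral_Ioc_eq_integral_Ioo]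
  calc ∫ t in Ioo (0:ℝ) 1, (t:ℂ)^((a:ℂ)-1) * ((1:ℂ)-t)^((b:ℂ)-1)
      = ∫ t in Ioo (0:ℝ) 1, ((t^(a-1) * (1-t)^(b-1) : ℝ) : ℂ) := by
        refine setIntegral_congr_fun measurableSet_Ioo (fun x hx => ?_)
        have hx0 : (0:ℝ) ≤ x := hx.1.le
        have hx1 : (0:ℝ) ≤ 1 - x := by linarith [hx.2]
        rw [Complex.ofReal_mul, Complex.ofReal_cpow hx0, Complex.ofReal_cpow hx1]
        push_cast
        ring
    _ = _ := integral_ofReal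

lemma real_beta {a b : ℝ} (ha : 0 < a) (hb : 0 < b) :
    ∫ u in (0:ℝ)..1, u^(a-1) * (1-u)^(b-1) = Gamma a * Gamma b / Gamma (a+b) := by
  have h := Complex.Gamma_mul_Gamma_eq_betaIntegral
    (s := a) (t := b) (by simpa using ha) (by simpa using hb)
  rw [betaCpx_eq, ← Complex.ofReal_add, Complex.Gamma_ofReal, Complex.Gamma_ofReal,
    Complex.Gamma_ofReal, ← Complex.ofReal_mul, ← Complex.ofReal_mul] at h
  have h3 := Complex.ofReal_inj.mp h
  have hG : Gamma (a+b) ≠ 0 := (Gamma_pos_of_pos (by linarith)).ne'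
  rw [h3]
  field_simp

lemma beta_integrableOn {a b : ℝ} (ha : 0 < a) (hb : 0 < b) :
    IntegrableOn (fun u : ℝ => u^(a-1) * (1-u)^(b-1)) (Ioc 0 1) := by
  have h := Complex.betaIntegral_convergent (u := a) (v := b) (by simpa using ha) (by simpa using hb)
  have h1 : IntegrableOn (fun x : ℝ => (x:ℂ)^((a:ℂ)-1) * ((1:ℂ)-x)^((b:ℂ)-1)) (Ioc 0 1) :=
    (intervalIntegrable_iff_integrableOn_Ioc_of_le zero_le_one).mp h
  have h2 : IntegrableOn (fun x : ℝ =>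
      RCLike.re ((x:ℂ)^((a:ℂ)-1) * ((1:ℂ)-x)^((b:ℂ)-1))) (Ioc 0 1) := h1.re
  refine h2.congr_fun (fun x hx => ?_) measurableSet_Ioc
  have hx0 : (0:ℝ) ≤ x := hx.1.le
  have hx1 : (0:ℝ) ≤ 1 - x := by linarith [hx.2]
  have he : ((x:ℂ)^((a:ℂ)-1) * ((1:ℂ)-x)^((b:ℂ)-1)) = ((x^(a-1)*(1-x)^(b-1) : ℝ) : ℂ) := by
    rw [Complex.ofReal_mul, Complex.ofReal_cpow hx0, Complex.ofReal_cpow hx1]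
    push_cast
    ring
  beta_reduce
  rw [he]
  simp

lemma gamma_integrableOn {m r : ℝ} (hm : 0 < m) (hr : 0 < r) :
    IntegrableOn (fun x : ℝ => x^(m-1) * Real.exp (-(r*x))) (Ioi 0) := by
  have h0 : IntegrableOn (fun x : ℝ => Real.exp (-x) * x ^ (m-1)) (Ioi 0) :=
    Real.GammaIntegral_convergent hm
  have h1 : IntegrableOn (fun x : ℝ => Real.exp (-(r*x)) * (r*x) ^ (m-1)) (Ioi 0) := by
    have := (integrableOn_Ioi_comp_mul_left_iff
      (fun x : ℝ => Real.exp (-x) * x ^ (m-1)) 0 hr).mpr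
    simpa using this (by simpa using h0)
  have h2 : IntegrableOn (fun x : ℝ => r^(1-m) * (Real.exp (-(r*x)) * (r*x) ^ (m-1))) (Ioi 0) :=
    h1.const_mul (r^(1-m))
  refine h2.congr_fun (fun x hx => ?_) measurableSet_Ioi
  have hx : (0:ℝ) < x := hx
  beta_reduce
  rw [Real.mul_rpow hr.le hx.le]
  rw [show r^(1-m) * (Real.exp (-(r*x)) * (r^(m-1) * x^(m-1)))
      = (r^(1-m) * r^(m-1)) * (x^(m-1) * Real.exp (-(r*x))) by ring,
    ← Real.rpow_add hr]
  norm_num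

lemma cosh_integrableOn {m ν : ℝ} (h : |ν| < m) :
    IntegrableOn (fun t : ℝ => Real.cosh (ν*t) * Real.cosh t ^ (-m)) (Ioi 0) := by
  have hm : 0 < m := (abs_nonneg ν).trans_lt h
  refine integrable_of_isBigO_exp_neg (b := m - |ν|) (by linarith) ?_ ?_
  · have : Continuous fun t : ℝ => Real.cosh (ν*t) * Real.cosh t ^ (-m) := by
      refine (Real.continuous_cosh.comp (continuous_const.mul continuous_id)).mul ?_
      exact Real.continuous_cosh.rpow_const (fun t => Or.inl (Real.cosh_pos t).ne')
    exact this.continuousOn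
  · rw [Asymptotics.isBigO_iff]
    refine ⟨2^m, eventually_atTop.mpr ⟨0, fun t ht => ?_⟩⟩
    have h1 : Real.cosh (ν*t) ≤ Real.exp (|ν| * t) := by
      rw [Real.cosh_eq]
      have e1 : Real.exp (ν*t) ≤ Real.exp (|ν| * t) :=
        Real.exp_le_exp.mpr (mul_le_mul_of_nonneg_right (le_abs_self ν) ht)
      have e2 : Real.exp (-(ν*t)) ≤ Real.exp (|ν| * t) := by
        refine Real.exp_le_exp.mpr ?_
        rw [neg_mul_eq_neg_mul]
        exact mul_le_mul_of_nonneg_right (neg_le_abs ν) ht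
      linarith
    have h2 : Real.cosh t ^ (-m) ≤ 2^m * Real.exp (-(m*t)) := by
      have hle : Real.exp t / 2 ≤ Real.cosh t := by
        rw [Real.cosh_eq]; have := (Real.exp_pos (-t)).le; linarith
      have := Real.rpow_le_rpow_of_nonpos (by positivity) hle (neg_nonpos.mpr hm.le)
      calc Real.cosh t ^ (-m) ≤ (Real.exp t / 2) ^ (-m) := this
        _ = 2^m * Real.exp (-(m*t)) := by
            rw [Real.div_rpow (Real.exp_pos t).le (by norm_num),
              ← Real.exp_mul, Real.rpow_neg (by norm_num : (0:ℝ) ≤ 2)]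
            rw [div_inv_eq_mul, mul_comm, mul_comm t (-m), neg_mul]
    have hnn : 0 ≤ Real.cosh (ν*t) * Real.cosh t ^ (-m) := by positivity
    rw [Real.norm_eq_abs, Real.norm_eq_abs, abs_of_nonneg hnn,
      abs_of_nonneg (Real.exp_pos _).le]
    calc Real.cosh (ν*t) * Real.cosh t ^ (-m)
        ≤ Real.exp (|ν| * t) * (2^m * Real.exp (-(m*t))) := by
          exact mul_le_mul h1 h2 (by positivity) (by positivity)
      _ = 2^m * Real.exp (-(m - |ν|) * t) := by
          rw [show Real.exp (|ν| * t) * (2^m * Real.exp (-(m*t)))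
              = 2^m * (Real.exp (|ν| * t) * Real.exp (-(m*t))) by ring, ← Real.exp_add]
          ring_nf

lemma cosh_subst {a b : ℝ} (ha : 0 < a) (hb : 0 < b) :
    ∫ t in Ioi (0:ℝ), Real.cosh ((b-a)*t) * Real.cosh t ^ (-(a+b))
      = ∫ u in Ioo (1/2:ℝ) 1, 2^(a+b-2) * (u^(b-1)*(1-u)^(a-1) + u^(a-1)*(1-u)^(b-1)) := by
  set φ : ℝ → ℝ := fun t => (1 + Real.exp (-(2*t)))⁻¹ with hφdef
  set φ' : ℝ → ℝ := fun t => 2 * Real.exp (-(2*t)) * ((1 + Real.exp (-(2*t)))⁻¹)^2 with hφ'def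
  have hEpos : ∀ t : ℝ, 0 < 1 + Real.exp (-(2*t)) := fun t => by positivity
  have hderiv : ∀ t ∈ Ioi (0:ℝ), HasDerivWithinAt φ (φ' t) (Ioi 0) t := by
    intro t _
    have h1 : HasDerivAt (fun s : ℝ => -(2*s)) (-2) t := by
      exact (((hasDerivAt_id t).const_mul 2).neg).congr_deriv (by norm_num)
    have h2 : HasDerivAt (fun s : ℝ => 1 + Real.exp (-(2*s)))
        (Real.exp (-(2*t)) * (-2)) t := (h1.exp).const_add 1
    have h3 := h2.inv (hEpos t).ne'
    refine (h3.congr_deriv ?_).hasDerivWithinAt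
    simp only [hφ'def]
    field_simp
  have hinj : InjOn φ (Ioi 0) := by
    intro x _ y _ hxy
    have : 1 + Real.exp (-(2*x)) = 1 + Real.exp (-(2*y)) := by
      have := congrArg (·⁻¹) hxy
      simpa [hφdef, inv_inv] using this
    have := Real.exp_eq_exp.mp (by linarith : Real.exp (-(2*x)) = Real.exp (-(2*y)))
    linarith
  have himg : φ '' Ioi 0 = Ioo (1/2:ℝ) 1 := by
    ext u
    constructor
    · rintro ⟨t, ht, rfl⟩
      have ht : (0:ℝ) < t := ht
      have he1 : Real.exp (-(2*t)) < 1 := Real.exp_lt_one_iff.mpr (by linarith)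
      have he0 : 0 < Real.exp (-(2*t)) := Real.exp_pos _
      constructor
      · rw [show (1:ℝ)/2 = 2⁻¹ by norm_num]
        exact inv_strictAnti₀ (hEpos t) (by linarith)
      · have : (1:ℝ) < 1 + Real.exp (-(2*t)) := by linarith
        exact inv_lt_one_of_one_lt₀ this
    · rintro ⟨hu1, hu2⟩
      have hu0 : 0 < u := by linarith
      have h1u : 0 < 1 - u := by linarith
      refine ⟨Real.log (u/(1-u))/2, ?_, ?_⟩
      · have : (1:ℝ) < u/(1-u) := (one_lt_div h1u).mpr (by linarith)
        exact div_pos (Real.log_pos this) two_pos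
      · have hq : 0 < u/(1-u) := div_pos hu0 h1u
        have : Real.exp (-(2*(Real.log (u/(1-u))/2))) = (1-u)/u := by
          rw [show -(2*(Real.log (u/(1-u))/2)) = -Real.log (u/(1-u)) by ring,
            Real.exp_neg, Real.exp_log hq, inv_div]
        rw [hφdef]
        simp only [this]
        field_simp
        ring
  rw [← himg, integral_image_eq_integral_abs_deriv_smul measurableSet_Ioi hderiv hinj]
  refine setIntegral_congr_fun measurableSet_Ioi (fun t ht => ?_)
  have ht : (0:ℝ) < t := ht
  -- abbreviations
  set w : ℝ := (2 * Real.cosh t)⁻¹ with hwdef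
  have hw : 0 < w := by rw [hwdef]; positivity
  have hsum : Real.exp t * w + Real.exp (-t) * w = 1 := by
    rw [hwdef, Real.cosh_eq]
    field_simp
  have hE2 : Real.exp (-(2*t)) * (Real.exp t * Real.exp t) = 1 := by
    rw [← Real.exp_add, ← Real.exp_add, show -(2*t) + (t + t) = 0 by ring, Real.exp_zero]
  have h2c : 2 * Real.cosh t = Real.exp t + Real.exp (-t) := by rw [Real.cosh_eq]; ring
  have hprod : (1 + Real.exp (-(2*t))) * (Real.exp t * w) = 1 := by
    have hexp : (1 + Real.exp (-(2*t))) * Real.exp t = Real.exp t + Real.exp (-t) := by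
      rw [add_mul, one_mul, ← Real.exp_add, show -(2*t) + t = -t by ring]
    rw [← mul_assoc, hexp, hwdef, h2c, mul_inv_cancel₀ (by positivity)]
  have key1 : φ t = Real.exp t * w := inv_eq_of_mul_eq_one_right hprod
  have key2 : 1 - φ t = Real.exp (-t) * w := by
    rw [key1]; linarith [hsum]
  have key3 : φ' t = 2 * (w * w) := by
    have hphi : (1 + Real.exp (-(2*t)))⁻¹ = Real.exp t * w := key1
    show 2 * Real.exp (-(2*t)) * ((1 + Real.exp (-(2*t)))⁻¹)^2 = 2 * (w * w)
    rw [hphi]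
    linear_combination 2*w*w*hE2
  have hterm : ∀ p q : ℝ, p + q = a + b →
      (φ t)^(p-1) * (1 - φ t)^(q-1) = Real.exp ((p-q)*t) * w^(a+b-2) := by
    intro p q hpq
    rw [key2, key1, Real.mul_rpow (Real.exp_pos t).le hw.le,
      Real.mul_rpow (Real.exp_pos (-t)).le hw.le, ← Real.exp_mul, ← Real.exp_mul,
      show Real.exp (t*(p-1)) * w^(p-1) * (Real.exp (-t*(q-1)) * w^(q-1))
        = (Real.exp (t*(p-1)) * Real.exp (-t*(q-1))) * (w^(p-1) * w^(q-1)) by ring,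
      ← Real.exp_add, ← Real.rpow_add hw]
    rw [show t*(p-1) + (-t*(q-1)) = (p-q)*t by ring, show p-1+(q-1) = a+b-2 by linarith]
  have h1 := hterm b a (by ring)
  have h2 := hterm a b (by ring)
  rw [smul_eq_mul, key3, h1, h2, abs_of_nonneg (by positivity)]
  rw [show Real.exp ((b-a)*t) * w^(a+b-2) + Real.exp ((a-b)*t) * w^(a+b-2)
      = (Real.exp ((b-a)*t) + Real.exp (-((b-a)*t))) * w^(a+b-2) by ring_nf,
    show Real.exp ((b-a)*t) + Real.exp (-((b-a)*t)) = 2 * Real.cosh ((b-a)*t) by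
      rw [Real.cosh_eq]; ring]
  have hww : w^(a+b) = w * w * w^(a+b-2) := by
    rw [show a+b = 1+1+(a+b-2) by ring, Real.rpow_add hw, Real.rpow_add hw, Real.rpow_one]
    ring_nf
  have h2p : (2:ℝ)^(a+b) = 2*2*2^(a+b-2) := by
    rw [show a+b = 1+1+(a+b-2) by ring, Real.rpow_add two_pos, Real.rpow_add two_pos,
      Real.rpow_one]
    ring_nf
  have hfin : (2:ℝ)^(a+b) * w^(a+b) = Real.cosh t ^ (-(a+b)) := by
    rw [← Real.mul_rpow (by norm_num) hw.le,
      show (2:ℝ)*w = (Real.cosh t)⁻¹ by rw [hwdef, mul_inv, ← mul_assoc]; norm_num,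
      Real.inv_rpow (Real.cosh_pos t).le, ← Real.rpow_neg (Real.cosh_pos t).le]
  rw [show 2*(w*w)*(2^(a+b-2)*(2*Real.cosh ((b-a)*t) * w^(a+b-2)))
      = Real.cosh ((b-a)*t) * ((2*2*2^(a+b-2)) * (w*w*w^(a+b-2))) by ring,
    ← h2p, ← hww, hfin]

lemma half_to_full {a b : ℝ} (ha : 0 < a) (hb : 0 < b) :
    ∫ u in Ioo (1/2:ℝ) 1, (u^(b-1)*(1-u)^(a-1) + u^(a-1)*(1-u)^(b-1))
      = ∫ u in (0:ℝ)..1, u^(a-1)*(1-u)^(b-1) := by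
  have hsub : Ioo (1/2:ℝ) 1 ⊆ Ioc 0 1 := fun x hx => ⟨by linarith [hx.1], hx.2.le⟩
  have hf : IntegrableOn (fun u : ℝ => u^(a-1) * (1-u)^(b-1)) (Ioo (1/2:ℝ) 1) :=
    (beta_integrableOn ha hb).mono_set hsub
  have hg : IntegrableOn (fun u : ℝ => u^(b-1) * (1-u)^(a-1)) (Ioo (1/2:ℝ) 1) :=
    (beta_integrableOn hb ha).mono_set hsub
  rw [integral_add hg hf]
  have e1 : ∫ u in Ioo (1/2:ℝ) 1, u^(b-1)*(1-u)^(a-1)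
      = ∫ u in (0:ℝ)..(1/2), u^(a-1)*(1-u)^(b-1) := by
    rw [← MeasureTheory.integral_Ioc_eq_integral_Ioo,
      ← intervalIntegral.integral_of_le (by norm_num : (1/2:ℝ) ≤ 1)]
    have := intervalIntegral.integral_comp_sub_left
      (a := (1/2:ℝ)) (b := 1) (fun u : ℝ => u^(a-1)*(1-u)^(b-1)) 1
    norm_num at this
    rw [← this]
    refine intervalIntegral.integral_congr (fun x _ => ?_)
    ring
  have e2 : ∫ u in Ioo (1/2:ℝ) 1, u^(a-1)*(1-u)^(b-1)
      = ∫ u in (1/2:ℝ)..1, u^(a-1)*(1-u)^(b-1) := by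
    rw [← MeasureTheory.integral_Ioc_eq_integral_Ioo,
      ← intervalIntegral.integral_of_le (by norm_num : (1/2:ℝ) ≤ 1)]
  rw [e1, e2]
  refine intervalIntegral.integral_add_adjacent_intervals ?_ ?_
  · refine (intervalIntegrable_iff_integrableOn_Ioc_of_le (by norm_num)).mpr ?_
    exact (beta_integrableOn ha hb).mono_set (Ioc_subset_Ioc le_rfl (by norm_num))
  · refine (intervalIntegrable_iff_integrableOn_Ioc_of_le (by norm_num)).mpr ?_
    exact (beta_integrableOn ha hb).mono_set (Ioc_subset_Ioc (by norm_num) le_rfl)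

end Aux

/-- The modified Bessel function of the second kind,
`K_ν(x) = ∫₀^∞ e^{−x cosh t} cosh(νt) dt`. -/
noncomputable def besselK (ν x : ℝ) : ℝ :=
  ∫ t in Set.Ioi (0 : ℝ), Real.exp (-x * Real.cosh t) * Real.cosh (ν * t)

/-- Mellin transform of the Bessel-K function: for real `m > |ν|` and `α > 0`,
`∫₀^∞ x^{m−1} K_ν(αx) dx = (2^{m−2}/α^m) Γ((m−ν)/2) Γ((m+ν)/2)`. -/
theorem mellin_besselK (m ν α : ℝ) (h : |ν| < m) (hα : 0 < α) :
    ∫ x in Set.Ioi (0 : ℝ), x ^ (m-1) * besselK ν (α*x)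
      = (2:ℝ) ^ (m-2) / α ^ m * Real.Gamma ((m-ν)/2) * Real.Gamma ((m+ν)/2) := by
  have hm : 0 < m := (abs_nonneg ν).trans_lt h
  obtain ⟨hν1, hν2⟩ := abs_lt.mp h
  have ha : 0 < (m-ν)/2 := by linarith
  have hb : 0 < (m+ν)/2 := by linarith
  set f : ℝ → ℝ → ℝ :=
    fun x t => x^(m-1) * (Real.exp (-(α * Real.cosh t * x)) * Real.cosh (ν*t)) with hfdef
  have hcosh_pos : ∀ t : ℝ, 0 < α * Real.cosh t := fun t => by positivity
  -- inner x-integral value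
  have hval : ∀ t : ℝ, (∫ x in Ioi (0:ℝ), f x t)
      = ((1/(α * Real.cosh t))^m * Gamma m) * Real.cosh (ν*t) := by
    intro t
    have : (∫ x in Ioi (0:ℝ), f x t)
        = ∫ x in Ioi (0:ℝ), (x^(m-1) * Real.exp (-(α * Real.cosh t * x))) * Real.cosh (ν*t) := by
      refine setIntegral_congr_fun measurableSet_Ioi (fun x _ => ?_); simp only [hfdef]; ring
    rw [this, integral_mul_const, integral_rpow_mul_exp_neg_mul_Ioi hm (hcosh_pos t)]
  -- integrability in x for each t
  have hxint : ∀ t : ℝ, Integrable (fun x => f x t) (volume.restrict (Ioi 0)) := by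
    intro t
    have h1 : IntegrableOn (fun x : ℝ => x^(m-1) * Real.exp (-(α * Real.cosh t * x)) * Real.cosh (ν*t)) (Ioi 0) :=
      (gamma_integrableOn hm (hcosh_pos t)).mul_const (Real.cosh (ν*t))
    refine h1.congr_fun (fun x _ => ?_) measurableSet_Ioi
    simp only [hfdef]; ring
  -- measurability
  have hmeas : AEStronglyMeasurable (Function.uncurry f)
      ((volume.restrict (Ioi (0:ℝ))).prod (volume.restrict (Ioi (0:ℝ)))) := by
    apply Measurable.aestronglyMeasurable
    show Measurable fun p : ℝ × ℝ =>
      p.1^(m-1) * (Real.exp (-(α * Real.cosh p.2 * p.1)) * Real.cosh (ν * p.2))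
    fun_prop
  -- rpow identity
  have hrpow : ∀ t : ℝ, (1/(α * Real.cosh t))^m = (1/α)^m * Real.cosh t ^ (-m) := by
    intro t
    rw [one_div, mul_inv, Real.mul_rpow (by positivity) (by positivity),
      Real.inv_rpow (Real.cosh_pos t).le, ← Real.rpow_neg (Real.cosh_pos t).le, one_div]
  -- norm integral
  have hnorm : ∀ t : ℝ, (∫ x in Ioi (0:ℝ), ‖f x t‖)
      = ((1/(α * Real.cosh t))^m * Gamma m) * Real.cosh (ν*t) := by
    intro t
    rw [← hval t]
    refine setIntegral_congr_fun measurableSet_Ioi (fun x hx => ?_)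
    have hx0 : (0:ℝ) ≤ x := (le_of_lt hx)
    rw [Real.norm_eq_abs, abs_of_nonneg (by positivity)]
  -- integrability of the t-marginal
  have htm : Integrable (fun t => ((1/(α * Real.cosh t))^m * Gamma m) * Real.cosh (ν*t))
      (volume.restrict (Ioi 0)) := by
    have h1 : IntegrableOn (fun t : ℝ => ((1/α)^m * Gamma m) * (Real.cosh (ν*t) * Real.cosh t ^ (-m))) (Ioi 0) :=
      (cosh_integrableOn h).const_mul ((1/α)^m * Gamma m)
    refine h1.congr_fun (fun t _ => ?_) measurableSet_Ioi
    rw [hrpow t]; ring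
  -- Fubini
  have hInt : Integrable (Function.uncurry f)
      ((volume.restrict (Ioi (0:ℝ))).prod (volume.restrict (Ioi (0:ℝ)))) := by
    refine (integrable_prod_iff' hmeas).mpr ⟨Eventually.of_forall hxint, ?_⟩
    have he : (fun t => ∫ x in Ioi (0:ℝ), ‖f x t‖)
        = fun t => ((1/(α * Real.cosh t))^m * Gamma m) * Real.cosh (ν*t) := funext hnorm
    exact he ▸ htm
  have hswap := MeasureTheory.integral_integral_swap hInt
  -- rewrite LHS
  have hLHS : ∫ x in Set.Ioi (0 : ℝ), x ^ (m-1) * besselK ν (α*x)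
      = ∫ x in Ioi (0:ℝ), ∫ t in Ioi (0:ℝ), f x t := by
    refine setIntegral_congr_fun measurableSet_Ioi (fun x _ => ?_)
    rw [besselK, ← integral_const_mul]
    refine setIntegral_congr_fun measurableSet_Ioi (fun t _ => ?_)
    simp only [hfdef]; ring_nf
  rw [hLHS, hswap]
  have hstep : ∫ t in Ioi (0:ℝ), ∫ x in Ioi (0:ℝ), f x t
      = ((1/α)^m * Gamma m) * ∫ t in Ioi (0:ℝ), Real.cosh (ν*t) * Real.cosh t ^ (-m) := by
    rw [← integral_const_mul]
    refine setIntegral_congr_fun measurableSet_Ioi (fun t _ => ?_)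
    rw [hval t, hrpow t]; ring
  rw [hstep]
  -- the t-integral via substitution & beta
  have hsub : ∫ t in Ioi (0:ℝ), Real.cosh (ν*t) * Real.cosh t ^ (-m)
      = 2^(m-2) * (Gamma ((m-ν)/2) * Gamma ((m+ν)/2) / Gamma m) := by
    have e0 : ∫ t in Ioi (0:ℝ), Real.cosh (ν*t) * Real.cosh t ^ (-m)
        = ∫ t in Ioi (0:ℝ), Real.cosh (((m+ν)/2 - (m-ν)/2)*t)
            * Real.cosh t ^ (-((m-ν)/2 + (m+ν)/2)) := by
      refine setIntegral_congr_fun measurableSet_Ioi (fun t _ => ?_)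
      rw [show (m+ν)/2 - (m-ν)/2 = ν by ring, show (m-ν)/2 + (m+ν)/2 = m by ring]
    rw [e0, cosh_subst ha hb, integral_const_mul, half_to_full ha hb, real_beta ha hb,
      show (m-ν)/2 + (m+ν)/2 = m by ring]
  rw [hsub]
  have hG : Gamma m ≠ 0 := (Gamma_pos_of_pos hm).ne'
  have hαm : α ^ m ≠ 0 := (Real.rpow_pos_of_pos hα m).ne'
  rw [one_div, Real.inv_rpow hα.le]
  field_simp
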